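/- arXiv:1905.13393 — 3 statements merged into one kernel-verified Lean document; each statement's English description precedes it below -/
import Mathlib

section
/- In F_q[x], E_{m-1}(x) = ∏_{a} (x - a), where the product is over all a ∈ F_q such that both 2 - a and 2 + a are nonzero squares in F_q, and E_{m-1} denotes the image in F_q[x] of the (m-1)-st Dickson polynomial of the second kind. -/
open scoped Classical
open Polynomial

/-- The Dickson polynomials of the second kind: `E 0 = 1`, `E 1 = X`,
`E (k+2) = X * E (k+1) - E k`. -/
noncomputable def dicksonSnd : ℕ → Polynomial ℤ
  | 0 => 1
  | 1 => Polynomial.X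
  | (k + 2) => Polynomial.X * dicksonSnd (k + 1) - dicksonSnd k



lemma dicksonSnd_monic_natDegree : ∀ k, (dicksonSnd k).Monic ∧ (dicksonSnd k).natDegree = k := by
  intro k
  induction k using Nat.twoStepInduction with
  | zero => exact ⟨monic_one, natDegree_one⟩
  | one => exact ⟨monic_X, natDegree_X⟩
  | more k ih1 ih2 =>
    obtain ⟨hm1, hd1⟩ := ih1
    obtain ⟨hm2, hd2⟩ := ih2
    have hmul : (Polynomial.X * dicksonSnd (k+1)).Monic := (monic_X).mul hm2
    have hdmul : (Polynomial.X * dicksonSnd (k+1)).natDegree = k + 2 := by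
      rw [(monic_X).natDegree_mul hm2, natDegree_X, hd2]; omega
    have hlt : (dicksonSnd k).degree < (Polynomial.X * dicksonSnd (k+1)).degree := by
      rw [degree_eq_natDegree hmul.ne_zero, hdmul]
      refine lt_of_le_of_lt degree_le_natDegree ?_
      rw [hd1]
      exact_mod_cast (by omega : k < k + 2)
    have heq : dicksonSnd (k+2) = Polynomial.X * dicksonSnd (k+1) + (-(dicksonSnd k)) := by
      simp [dicksonSnd]; ring
    rw [heq]
    constructor
    · exact hmul.add_of_left (by rwa [degree_neg])
    · rw [natDegree_add_eq_left_of_degree_lt (by rwa [degree_neg]), hdmul]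

lemma dicksonSnd_key {R : Type*} [CommRing R] (z w : R) (h : z * w = 1) :
    ∀ k, (z - w) * Polynomial.eval₂ (Int.castRingHom R) (z + w) (dicksonSnd k)
      = z ^ (k+1) - w ^ (k+1) := by
  intro k
  induction k using Nat.twoStepInduction with
  | zero => simp [dicksonSnd]
  | one => simp [dicksonSnd]; ring
  | more k ih1 ih2 =>
    have : dicksonSnd (k+2) = Polynomial.X * dicksonSnd (k+1) - dicksonSnd k := rfl
    rw [this, eval₂_sub, eval₂_mul, eval₂_X]
    linear_combination (z + w) * ih2 - ih1 + (z^(k+1) - w^(k+1)) * h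

lemma dicksonSnd_root {F : Type*} [Field F] [Fintype F]
    (hq : Odd (Fintype.card F)) (m : ℕ) (hm0 : 0 < m)
    (hm : 4 * (m : ℤ) = (Fintype.card F : ℤ) - (-1) ^ ((Fintype.card F - 1) / 2))
    (a : F) (h1 : IsSquare (2 - a)) (h1' : 2 - a ≠ 0)
    (h2 : IsSquare (2 + a)) (h2' : 2 + a ≠ 0) :
    ((dicksonSnd (m - 1)).map (Int.castRingHom F)).IsRoot a := by
  classical
  have hchar2 : ringChar F ≠ 2 := by
    intro h
    have h2 := (FiniteField.even_card_iff_char_two (F := F)).mp h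
    have h3 := Nat.odd_iff.mp hq
    omega
  set q := Fintype.card F with hq'
  have h2F : (2 : F) ≠ 0 := Ring.two_ne_zero hchar2
  obtain ⟨t, ht⟩ := h1
  obtain ⟨s, hs⟩ := h2
  have hs0 : s ≠ 0 := fun h => h2' (by rw [hs, h, mul_zero])
  have ht0 : t ≠ 0 := fun h => h1' (by rw [ht, h, mul_zero])
  set K := AlgebraicClosure F
  set φ := algebraMap F K with hφ
  have hinj : Function.Injective φ := (algebraMap F K).injective
  have h2K : (2 : K) ≠ 0 := by
    intro h
    apply h2F
    apply hinj
    rw [map_ofNat, map_zero, h]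
  obtain ⟨i, hi⟩ := IsAlgClosed.exists_pow_nat_eq (-1 : K) (n := 2) (by norm_num)
  have hi0 : i ≠ 0 := by
    intro h
    rw [h] at hi
    simp at hi
  set S := φ s with hS
  set T := φ t with hT
  have hSsq : S * S = 2 + φ a := by rw [hS, ← map_mul, ← hs, map_add, map_ofNat]
  have hTsq : T * T = 2 - φ a := by rw [hT, ← map_mul, ← ht, map_sub, map_ofNat]
  set u : K := (S + i * T) / 2 with hu
  set v : K := (S - i * T) / 2 with hv
  have huv : u * v = 1 := by
    rw [hu, hv]
    have h4 : (2 : K) * 2 ≠ 0 := mul_ne_zero h2K h2K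
    rw [div_mul_div_comm, div_eq_one_iff_eq h4]
    linear_combination hSsq + hTsq - (T * T) * hi
  have hu0 : u ≠ 0 := left_ne_zero_of_mul_eq_one huv
  -- Frobenius
  have hp : Nat.Prime (ringChar F) := CharP.char_is_prime F (ringChar F)
  haveI : Fact (Nat.Prime (ringChar F)) := ⟨hp⟩
  haveI : CharP K (ringChar F) := charP_of_injective_algebraMap hinj (ringChar F)
  obtain ⟨n, -, hcard⟩ := FiniteField.card F (ringChar F)
  have hfrob : ∀ x y : K, (x + y) ^ q = x ^ q + y ^ q := by
    intro x y
    rw [hq', hcard]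
    exact add_pow_char_pow (R := K) (p := ringChar F) (n := ↑n) x y
  have hφpow : ∀ x : F, (φ x) ^ q = φ x := by
    intro x
    rw [← map_pow, FiniteField.pow_card]
  have hqodd : q % 2 = 1 := Nat.odd_iff.mp hq
  have hqe : q = 2 * ((q - 1) / 2) + 1 := by omega
  have hipow : i ^ q = (-1 : K) ^ ((q - 1) / 2) * i := by
    conv_lhs => rw [hqe]
    rw [pow_succ, pow_mul, hi]
  have h2pow : (2 : K) ^ q = 2 := by
    have := hφpow 2
    rwa [map_ofNat] at this
  -- u ^ (4 * m) = 1
  have hu4 : u ^ (4 * m) = 1 := by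
    rcases Nat.even_or_odd ((q - 1) / 2) with he | he
    · -- ε = 1 : u^q = u, 4m = q - 1
      have hm' : 4 * m = q - 1 := by
        have : ((-1 : ℤ)) ^ ((q - 1) / 2) = 1 := he.neg_one_pow
        rw [this] at hm
        omega
      have huq : u ^ q = u := by
        rw [hu, div_pow, hfrob, mul_pow, hφpow, hφpow, hipow, he.neg_one_pow, one_mul, h2pow]
      have : u ^ (q - 1) * u = u := by
        rw [← pow_succ]
        have : q - 1 + 1 = q := by omega
        rw [this, huq]
      have := mul_right_cancel₀ hu0 (this.trans (one_mul u).symm)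
      rw [hm', this]
    · -- ε = -1 : u^q = v, 4m = q + 1
      have hm' : 4 * m = q + 1 := by
        have : ((-1 : ℤ)) ^ ((q - 1) / 2) = -1 := he.neg_one_pow
        rw [this] at hm
        omega
      have huq : u ^ q = v := by
        rw [hu, hv, div_pow, hfrob, mul_pow, hφpow, hφpow, hipow, he.neg_one_pow, h2pow]
        rw [neg_one_mul, neg_mul, ← sub_eq_add_neg]
      rw [hm', pow_succ, huq, mul_comm]
      exact huv
  -- the root computation
  set z : K := u ^ 2 with hz
  set w : K := v ^ 2 with hw
  have hzw : z * w = 1 := by rw [hz, hw, ← mul_pow, huv, one_pow]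
  have hsum : z + w = φ a := by
    rw [hz, hw, hu, hv]
    rw [div_pow, div_pow, ← add_div, div_eq_iff (pow_ne_zero 2 h2K)]
    linear_combination 2 * hSsq - 2 * hTsq + (2 * (T * T)) * hi
  have hdiff : z - w = S * (i * T) := by
    rw [hz, hw, hu, hv]
    rw [div_pow, div_pow, ← sub_div, div_eq_iff (pow_ne_zero 2 h2K)]
    clear_value z w u v S T
    ring
  have hS0 : S ≠ 0 := fun h => hs0 (hinj (by rw [← hS, h, map_zero]))
  have hT0 : T ≠ 0 := fun h => ht0 (hinj (by rw [← hT, h, map_zero]))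
  have hdiff0 : z - w ≠ 0 := by
    rw [hdiff]
    exact mul_ne_zero hS0 (mul_ne_zero hi0 hT0)
  have hzm : z ^ m = w ^ m := by
    have h1 : z ^ m * w ^ m = 1 := by rw [← mul_pow, hzw, one_pow]
    have h2 : z ^ m * z ^ m = 1 := by
      rw [← pow_add, hz, ← pow_mul]
      have : 2 * (m + m) = 4 * m := by ring
      rw [this, hu4]
    have hz0 : z ^ m ≠ 0 := pow_ne_zero _ (pow_ne_zero _ hu0)
    exact mul_left_cancel₀ hz0 (h2.trans h1.symm)
  have hkey := dicksonSnd_key z w hzw (m - 1)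
  rw [Nat.sub_add_cancel hm0, hzm, sub_self] at hkey
  have heval : Polynomial.eval₂ (Int.castRingHom K) (z + w) (dicksonSnd (m - 1)) = 0 := by
    rcases mul_eq_zero.mp hkey with h | h
    · exact absurd h hdiff0
    · exact h
  rw [hsum] at heval
  -- transfer down to F
  have htrans : φ (Polynomial.eval a ((dicksonSnd (m - 1)).map (Int.castRingHom F)))
      = Polynomial.eval₂ (Int.castRingHom K) (φ a) (dicksonSnd (m - 1)) := by
    rw [eval_map, hom_eval₂]
    congr 1
  have : φ (Polynomial.eval a ((dicksonSnd (m - 1)).map (Int.castRingHom F))) = 0 := by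
    rw [htrans, heval]
  exact hinj (this.trans (map_zero φ).symm)

lemma card_both_squares {F : Type*} [Field F] [Fintype F]
    (hq : Odd (Fintype.card F)) (m : ℕ) (hm0 : 0 < m)
    (hm : 4 * (m : ℤ) = (Fintype.card F : ℤ) - (-1) ^ ((Fintype.card F - 1) / 2)) :
    (Finset.univ.filter
        (fun a : F => (IsSquare (2 - a) ∧ 2 - a ≠ 0) ∧ (IsSquare (2 + a) ∧ 2 + a ≠ 0))).card
      = m - 1 := by
  classical
  have hchar2 : ringChar F ≠ 2 := by
    intro h
    have h2 := (FiniteField.even_card_iff_char_two (F := F)).mp h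
    have h3 := Nat.odd_iff.mp hq
    omega
  have h2F : (2 : F) ≠ 0 := Ring.two_ne_zero hchar2
  have h4F : (4 : F) ≠ 0 := by
    intro h
    apply h2F
    have : (4 : F) = 2 * 2 := by norm_num
    rw [this] at h
    rcases mul_eq_zero.mp h with h | h <;> exact h
  set q := Fintype.card F with hq'
  set χ := quadraticChar F with hχ
  -- step 1 : ∑ χ(4 - a²) = -χ(-1)
  have step1 : ∑ a : F, χ (4 - a ^ 2) = - χ (-1) := by
    have e1 : ∑ a : F, χ (4 - a ^ 2) = ∑ b : F, χ (b * (4 - b)) := by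
      calc ∑ a : F, χ (4 - a ^ 2)
          = ∑ a : F, χ ((Equiv.subLeft (2:F) a) * (4 - Equiv.subLeft (2:F) a)) :=
            Finset.sum_congr rfl (fun a _ => by simp only [Equiv.subLeft_apply]; congr 1; ring)
        _ = ∑ b : F, χ (b * (4 - b)) :=
            Equiv.sum_comp (Equiv.subLeft (2:F)) (fun b => χ (b * (4 - b)))
    have e3 : ∑ b : F, χ (4 * b⁻¹ - 1) = 0 := by
      have : ∑ b : F, χ (4 * b⁻¹ - 1)
          = ∑ b : F, χ (((Equiv.inv F).trans
              ((Equiv.mulLeft₀ (4:F) h4F).trans (Equiv.subRight (1:F)))) b) := by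
        apply Finset.sum_congr rfl
        intro b _
        simp [Equiv.subRight_apply, Equiv.mulLeft₀]
      rw [this, Equiv.sum_comp _ (fun b => χ b)]
      exact quadraticChar_sum_zero hchar2
    have e2 : ∀ b : F, b ≠ 0 → χ (b * (4 - b)) = χ (4 * b⁻¹ - 1) := by
      intro b hb
      have : b * (4 - b) = b ^ 2 * (4 * b⁻¹ - 1) := by field_simp
      rw [this, map_mul, quadraticChar_sq_one' hb, one_mul]
    have l3 : ∑ b ∈ Finset.univ.erase (0 : F), χ (b * (4 - b))
        = ∑ b ∈ Finset.univ.erase (0 : F), χ (4 * b⁻¹ - 1) :=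
      Finset.sum_congr rfl (fun b hb => e2 b (Finset.ne_of_mem_erase hb))
    have l1 : ∑ b : F, χ (b * (4 - b)) = ∑ b ∈ Finset.univ.erase (0 : F), χ (b * (4 - b)) := by
      rw [← Finset.add_sum_erase Finset.univ (fun b : F => χ (b * (4 - b)))
        (Finset.mem_univ (0 : F))]
      have h0 : (0 : F) * (4 - 0) = 0 := by ring
      rw [h0, hχ, quadraticChar_zero, zero_add]
    have l2 : ∑ b : F, χ (4 * b⁻¹ - 1)
        = χ (-1) + ∑ b ∈ Finset.univ.erase (0 : F), χ (4 * b⁻¹ - 1) := by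
      rw [← Finset.add_sum_erase Finset.univ (fun b : F => χ (4 * b⁻¹ - 1))
        (Finset.mem_univ (0 : F))]
      have h0 : (4 : F) * (0 : F)⁻¹ - 1 = -1 := by rw [inv_zero, mul_zero, zero_sub]
      rw [h0]
    rw [e3] at l2
    rw [e1, l1, l3]
    linarith [l2]
  -- χ(-1) = (-1)^((q-1)/2)
  have hchi : χ (-1) = (-1 : ℤ) ^ ((q - 1) / 2) := by
    have hqodd : q % 2 = 1 := Nat.odd_iff.mp hq
    rcases (by omega : q % 4 = 1 ∨ q % 4 = 3) with h4 | h4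
    · have heven : Even ((q - 1) / 2) := by rw [Nat.even_iff]; omega
      rw [heven.neg_one_pow]
      refine (quadraticChar_one_iff_isSquare (neg_ne_zero.mpr one_ne_zero)).mpr ?_
      rw [FiniteField.isSquare_neg_one_iff]
      omega
    · have hodd : Odd ((q - 1) / 2) := by rw [Nat.odd_iff]; omega
      rw [hodd.neg_one_pow]
      refine quadraticChar_neg_one_iff_not_isSquare.mpr ?_
      rw [FiniteField.isSquare_neg_one_iff]
      simp [hq'] at h4 ⊢
      omega
  -- expand the product
  have expand : ∀ a : F, (1 + χ (2 - a)) * (1 + χ (2 + a))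
      = 1 + χ (2 - a) + χ (2 + a) + χ (4 - a ^ 2) := by
    intro a
    have h : (4 : F) - a ^ 2 = (2 - a) * (2 + a) := by ring
    rw [h, map_mul]
    ring
  have sumU : ∑ a : F, (1 + χ (2 - a)) * (1 + χ (2 + a)) = (q : ℤ) - χ (-1) := by
    have s1 : ∑ a : F, χ (2 - a) = 0 := by
      have h := Equiv.sum_comp (Equiv.subLeft (2:F)) (fun b => χ b)
      simp only [Equiv.subLeft_apply] at h
      rw [h, hχ]
      exact quadraticChar_sum_zero hchar2
    have s2 : ∑ a : F, χ (2 + a) = 0 := by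
      have h := Equiv.sum_comp (Equiv.addLeft (2:F)) (fun b => χ b)
      simp only [Equiv.coe_addLeft] at h
      rw [h, hχ]
      exact quadraticChar_sum_zero hchar2
    calc ∑ a : F, (1 + χ (2 - a)) * (1 + χ (2 + a))
        = ∑ a : F, (1 + χ (2 - a) + χ (2 + a) + χ (4 - a ^ 2)) :=
          Finset.sum_congr rfl (fun a _ => expand a)
      _ = ∑ a : F, (1:ℤ) + ∑ a : F, χ (2 - a) + ∑ a : F, χ (2 + a) + ∑ a : F, χ (4 - a ^ 2) := by
          rw [← Finset.sum_add_distrib, ← Finset.sum_add_distrib, ← Finset.sum_add_distrib]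
      _ = (q : ℤ) - χ (-1) := by
          rw [s1, s2, step1, Finset.sum_const, Finset.card_univ]
          simp [hq']
          ring
  -- split off a = 2 and a = -2
  have h22 : (2 : F) ≠ -2 := fun h => h4F (by linear_combination h)
  set p : F → Prop := fun a => 2 - a ≠ 0 ∧ 2 + a ≠ 0 with hp
  have hfilternot : Finset.univ.filter (fun a : F => ¬ p a) = {2, -2} := by
    ext a
    simp only [Finset.mem_filter, Finset.mem_univ, true_and, Finset.mem_insert,
      Finset.mem_singleton, hp, not_and_or, not_not, not_ne_iff]
    constructor
    · rintro (h | h)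
      · left; rw [sub_eq_zero] at h; exact h.symm
      · right
        have : a = -2 := by linear_combination h
        exact this
    · rintro (rfl | rfl) <;> simp
  have sumNot : ∑ a ∈ Finset.univ.filter (fun a : F => ¬ p a),
      (1 + χ (2 - a)) * (1 + χ (2 + a)) = 4 := by
    rw [hfilternot, Finset.sum_pair h22]
    have c4 : χ (4 : F) = 1 := by
      have : (4 : F) = 2 ^ 2 := by norm_num
      rw [this]
      exact quadraticChar_sq_one' h2F
    have e1 : (2 : F) - 2 = 0 := by ring
    have e2 : (2 : F) + 2 = 4 := by norm_num
    have e3 : (2 : F) - (-2) = 4 := by norm_num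
    have e4 : (2 : F) + (-2) = 0 := by ring
    rw [e1, e2, e3, e4, c4, hχ, quadraticChar_zero]
    ring
  -- sum over T equals 4 * card
  set P := Finset.univ.filter
      (fun a : F => (IsSquare (2 - a) ∧ 2 - a ≠ 0) ∧ (IsSquare (2 + a) ∧ 2 + a ≠ 0)) with hP
  have sumT : ∑ a ∈ Finset.univ.filter p, (1 + χ (2 - a)) * (1 + χ (2 + a))
      = 4 * (P.card : ℤ) := by
    have key : ∀ a ∈ Finset.univ.filter p, (1 + χ (2 - a)) * (1 + χ (2 + a))
        = if (IsSquare (2 - a) ∧ 2 - a ≠ 0) ∧ (IsSquare (2 + a) ∧ 2 + a ≠ 0) then 4 else 0 := by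
      intro a ha
      rw [Finset.mem_filter] at ha
      obtain ⟨-, h1, h2⟩ := ha
      by_cases hs1 : IsSquare (2 - a)
      · by_cases hs2 : IsSquare (2 + a)
        · rw [if_pos ⟨⟨hs1, h1⟩, ⟨hs2, h2⟩⟩, (quadraticChar_one_iff_isSquare h1).mpr hs1,
            (quadraticChar_one_iff_isSquare h2).mpr hs2]
          norm_num
        · rw [if_neg (by tauto), quadraticChar_neg_one_iff_not_isSquare.mpr hs2]
          ring
      · rw [if_neg (by tauto), quadraticChar_neg_one_iff_not_isSquare.mpr hs1]
        ring
    rw [Finset.sum_congr rfl key, Finset.sum_ite, Finset.sum_const, Finset.sum_const,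
      Finset.filter_filter]
    have : Finset.filter (fun a : F => p a ∧
        ((IsSquare (2 - a) ∧ 2 - a ≠ 0) ∧ (IsSquare (2 + a) ∧ 2 + a ≠ 0))) Finset.univ = P := by
      rw [hP]
      apply Finset.filter_congr
      intro a _
      simp only [hp]
      tauto
    rw [this]
    simp [mul_comm]
  have split := Finset.sum_filter_add_sum_filter_not Finset.univ p
    (fun a : F => (1 + χ (2 - a)) * (1 + χ (2 + a)))
  rw [sumT, sumNot, sumU] at split
  -- conclude
  rw [hchi] at split
  have hfin : 4 * (P.card : ℤ) = 4 * (m : ℤ) - 4 := by omega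
  omega

/-- With `ε = (-1)^((q-1)/2)` and `m = (q - ε)/4` (a positive integer),
in `F_q[x]` we have `E_{m-1}(x) = ∏ (x - a)`, the product over all `a ∈ F_q` such that
both `2 - a` and `2 + a` are nonzero squares in `F_q`. -/
theorem dickson_snd_factorization {F : Type*} [Field F] [Fintype F]
    (hq : Odd (Fintype.card F)) (m : ℕ) (hm0 : 0 < m)
    (hm : 4 * (m : ℤ) = (Fintype.card F : ℤ) - (-1) ^ ((Fintype.card F - 1) / 2)) :
    (dicksonSnd (m - 1)).map (Int.castRingHom F) =
      ∏ a ∈ Finset.univ.filter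
          (fun a : F => (IsSquare (2 - a) ∧ 2 - a ≠ 0) ∧ (IsSquare (2 + a) ∧ 2 + a ≠ 0)),
        (Polynomial.X - Polynomial.C a) := by
  classical
  set P := Finset.univ.filter
      (fun a : F => (IsSquare (2 - a) ∧ 2 - a ≠ 0) ∧ (IsSquare (2 + a) ∧ 2 + a ≠ 0)) with hP
  set E : Polynomial F := (dicksonSnd (m - 1)).map (Int.castRingHom F) with hE
  obtain ⟨hmonic0, hdeg0⟩ := dicksonSnd_monic_natDegree (m - 1)
  have hEmonic : E.Monic := hmonic0.map _
  have hEdeg : E.natDegree = m - 1 := by rw [hE, hmonic0.natDegree_map, hdeg0]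
  have hEne : E ≠ 0 := hEmonic.ne_zero
  have hcard : P.card = m - 1 := card_both_squares hq m hm0 hm
  -- every element of P is a root of E
  have hPle : P.val ≤ E.roots := by
    rw [Multiset.le_iff_count]
    intro a
    by_cases ha : a ∈ P
    · have hmem := ha
      rw [hP, Finset.mem_filter] at hmem
      obtain ⟨-, ⟨hs1, hs1'⟩, ⟨hs2, hs2'⟩⟩ := hmem
      have hroot : E.IsRoot a := dicksonSnd_root hq m hm0 hm a hs1 hs1' hs2 hs2'
      have h1 : Multiset.count a P.val = 1 :=
        Multiset.count_eq_one_of_mem P.nodup (Finset.mem_val.mpr ha)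
      have h2 : a ∈ E.roots := by
        rw [Polynomial.mem_roots hEne]
        exact hroot
      rw [h1]
      exact Multiset.one_le_count_iff_mem.mpr h2
    · have h1 : Multiset.count a P.val = 0 :=
        Multiset.count_eq_zero_of_notMem (fun hc => ha (Finset.mem_val.mp hc))
      rw [h1]
      exact Nat.zero_le _
  set Q : Polynomial F := ∏ a ∈ P, (Polynomial.X - Polynomial.C a) with hQ
  have hQdvd : Q ∣ E := by
    have := (Multiset.prod_X_sub_C_dvd_iff_le_roots hEne P.val).mpr hPle
    rwa [hQ, Finset.prod_eq_multiset_prod]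
  have hQmonic : Q.Monic :=
    Polynomial.monic_prod_of_monic _ _ (fun a _ => Polynomial.monic_X_sub_C a)
  have hQdeg : Q.natDegree = m - 1 := by
    rw [hQ, Polynomial.natDegree_prod _ _ (fun a _ => Polynomial.X_sub_C_ne_zero a)]
    simp [Polynomial.natDegree_X_sub_C, hcard]
  obtain ⟨c, hc⟩ := hQdvd
  have hQne : Q ≠ 0 := hQmonic.ne_zero
  have hcne : c ≠ 0 := by
    rintro rfl
    rw [mul_zero] at hc
    exact hEne hc
  have hdegc : c.natDegree = 0 := by
    have := hEdeg
    rw [hc, Polynomial.natDegree_mul hQne hcne, hQdeg] at this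
    omega
  have hlc : c.leadingCoeff = 1 := by
    have h1 : E.leadingCoeff = Q.leadingCoeff * c.leadingCoeff := by
      rw [hc, Polynomial.leadingCoeff_mul]
    rw [hEmonic.leadingCoeff, hQmonic.leadingCoeff, one_mul] at h1
    exact h1.symm
  have hc1 : c = 1 := by
    rw [Polynomial.eq_C_of_natDegree_eq_zero hdegc]
    rw [Polynomial.leadingCoeff, hdegc] at hlc
    rw [hlc, map_one]
  rw [hc, hc1, mul_one]
end

section
/- Let S = {b ∈ F_q : 2 - b is a nonsquare in F_q and 2 + b is a nonzero square in F_q}. Then the map b ↦ b^2 - 2 is a bijection from S to S. -/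
private lemma isSquare_mul_iff_aux {F : Type*} [Field F] [Fintype F] {a b : F}
    (ha : a ≠ 0) (hb : b ≠ 0) : IsSquare (a * b) ↔ (IsSquare a ↔ IsSquare b) := by
  classical
  have hab : a * b ≠ 0 := mul_ne_zero ha hb
  rw [← quadraticChar_one_iff_isSquare hab, ← quadraticChar_one_iff_isSquare ha,
      ← quadraticChar_one_iff_isSquare hb, map_mul]
  rcases quadraticChar_dichotomy ha with h | h <;>
    rcases quadraticChar_dichotomy hb with h' | h' <;> simp [h, h']

/-- Let `S = {b ∈ F_q : 2 - b is a nonsquare and 2 + b is a nonzero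
square}`. Then `b ↦ b² - 2` is a bijection from `S` to `S`. -/
theorem sq_sub_two_bijOn {F : Type*} [Field F] [Fintype F]
    (hq : Odd (Fintype.card F)) :
    Set.BijOn (fun b : F => b ^ 2 - 2)
      {b : F | ¬ IsSquare (2 - b) ∧ (IsSquare (2 + b) ∧ 2 + b ≠ 0)}
      {b : F | ¬ IsSquare (2 - b) ∧ (IsSquare (2 + b) ∧ 2 + b ≠ 0)} := by
  classical
  refine ⟨?_, ?_, ?_⟩
  · -- MapsTo
    rintro b ⟨h1, h2, h3⟩
    have hb0 : b ≠ 0 := by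
      intro h
      subst h
      rw [sub_zero] at h1
      rw [add_zero] at h2
      exact h1 h2
    have h2mb : (2 : F) - b ≠ 0 := by
      intro h0
      exact h1 (by rw [h0]; exact IsSquare.zero)
    refine ⟨?_, ?_, ?_⟩
    · have heq : 2 - (b ^ 2 - 2) = (2 - b) * (2 + b) := by ring
      show ¬ IsSquare (2 - (b ^ 2 - 2))
      rw [heq]
      intro hsq
      have := (isSquare_mul_iff_aux h2mb h3).mp hsq
      exact h1 (this.mpr h2)
    · have heq : 2 + (b ^ 2 - 2) = b ^ 2 := by ring
      rw [heq]
      exact IsSquare.sq b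
    · have heq : 2 + (b ^ 2 - 2) = b ^ 2 := by ring
      rw [heq]
      exact pow_ne_zero 2 hb0
  · -- InjOn
    rintro a ⟨ha1, ha2, ha3⟩ b ⟨hb1, hb2, hb3⟩ h
    simp only at h
    have hfac : (a - b) * (a + b) = 0 := by linear_combination h
    rcases mul_eq_zero.mp hfac with h0 | h0
    · exact sub_eq_zero.mp h0
    · exfalso
      have : (2 : F) - b = 2 + a := by linear_combination -h0
      rw [this] at hb1
      exact hb1 ha2
  · -- SurjOn
    rintro c ⟨h1, h2, h3⟩
    obtain ⟨r, hr⟩ := h2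
    have hr0 : r ≠ 0 := by
      intro h
      rw [h, mul_zero] at hr
      exact h3 hr
    have h2mc : (2 : F) - c ≠ 0 := by
      intro h0
      exact h1 (by rw [h0]; exact IsSquare.zero)
    have hprod : (2 - r) * (2 + r) = 2 - c := by linear_combination hr
    have hns : ¬ IsSquare ((2 - r) * (2 + r)) := by rw [hprod]; exact h1
    have h2mr : (2 : F) - r ≠ 0 := by
      intro h0
      rw [h0, zero_mul] at hprod
      exact h2mc hprod.symm
    have h2pr : (2 : F) + r ≠ 0 := by
      intro h0
      rw [h0, mul_zero] at hprod
      exact h2mc hprod.symm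
    have hx : ¬ (IsSquare ((2 : F) - r) ↔ IsSquare ((2 : F) + r)) := fun h =>
      hns ((isSquare_mul_iff_aux h2mr h2pr).mpr h)
    by_cases hsq : IsSquare ((2 : F) + r)
    · refine ⟨r, ⟨?_, hsq, h2pr⟩, ?_⟩
      · intro h; exact hx ⟨fun _ => hsq, fun _ => h⟩
      · show r ^ 2 - 2 = c
        linear_combination -hr
    · refine ⟨-r, ⟨?_, ?_, ?_⟩, ?_⟩
      · show ¬ IsSquare (2 - (-r))
        rw [sub_neg_eq_add]
        exact hsq
      · show IsSquare (2 + (-r))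
        have : (2 : F) + (-r) = 2 - r := by ring
        rw [this]
        by_contra hns2
        exact hx ⟨fun h => absurd h hns2, fun h => absurd h hsq⟩
      · show (2 : F) + (-r) ≠ 0
        intro h0
        exact h2mr (by linear_combination h0)
      · show (-r) ^ 2 - 2 = c
        linear_combination -hr
end

section
/- Let S = {b ∈ F_q : 2 - b is a nonsquare in F_q and 2 + b is a nonzero square in F_q}. For every b ∈ S, let c = ∏_{a} (b - a), the product over all a ∈ F_q such that both 2 - a and 2 + a are nonsquares in F_q. Then c ∈ S and c^2 - 2 = b; that is, b ↦ ∏_{a}(b - a) is the inverse of the permutation b ↦ b^2 - 2 of S. -/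
open scoped Classical

open Polynomial

section Helpers

variable {K : Type*} [Field K]

/-- The key quadratic-character computation, valid in any field with a
"Frobenius" map `z ↦ z ^ q`. -/
theorem chi_aux (q h w : ℕ) (hq : q = 2 * h + 1)
    (hfrob : ∀ z u : K, (z + u) ^ q = z ^ q + u ^ q)
    (y : K) (hy0 : y ≠ 0) (hy1 : y ≠ 1) (hym1 : y ≠ -1)
    (hyw : y ^ (2 * w) = 1) (e : K)
    (hcase : (q = 2 * w + 1 ∧ e = 1) ∨ (q + 1 = 2 * w ∧ e = -1)) :
    (2 + (y + y⁻¹)) ^ h = (y ^ w)⁻¹ ∧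
      (2 - (y + y⁻¹)) ^ h = (-1) ^ h * e * (y ^ w)⁻¹ := by
  have hqodd : Odd q := ⟨h, by omega⟩
  have hy1' : y + 1 ≠ 0 := fun hc => hym1 (by linear_combination hc)
  have hy1'' : y - 1 ≠ 0 := sub_ne_zero.mpr hy1
  have hplus : (2 + (y + y⁻¹)) = (y + 1) ^ 2 * y⁻¹ := by
    field_simp
    ring
  have hminus : (2 - (y + y⁻¹)) = -((y - 1) ^ 2 * y⁻¹) := by
    field_simp
    ring
  have hfp : (y + 1) ^ q = y ^ q + 1 := by
    have := hfrob y 1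
    rwa [one_pow] at this
  have hfm : (y - 1) ^ q = y ^ q - 1 := by
    have h0 := hfrob y (-1)
    rw [hqodd.neg_one_pow] at h0
    rw [sub_eq_add_neg, sub_eq_add_neg]
    exact h0
  rcases hcase with ⟨hqw, rfl⟩ | ⟨hqw, rfl⟩
  · -- q = 2 w + 1, so y ^ q = y
    have hw : w = h := by omega
    subst hw
    have hyq : y ^ q = y := by rw [hqw, pow_succ, hyw, one_mul]
    have k1 : (y + 1) ^ (2 * w) * (y + 1) = 1 * (y + 1) := by
      rw [← pow_succ, ← hqw, hfp, hyq, one_mul]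
    have k1' : (y + 1) ^ (2 * w) = 1 := mul_right_cancel₀ hy1' k1
    have k2 : (y - 1) ^ (2 * w) * (y - 1) = 1 * (y - 1) := by
      rw [← pow_succ, ← hqw, hfm, hyq, one_mul]
    have k2' : (y - 1) ^ (2 * w) = 1 := mul_right_cancel₀ hy1'' k2
    constructor
    · rw [hplus, mul_pow, ← pow_mul, k1', one_mul, inv_pow]
    · rw [hminus, neg_pow, mul_pow, ← pow_mul, k2', one_mul, inv_pow, mul_one]
  · -- q + 1 = 2 w, so y ^ q = y⁻¹
    have hw : w = h + 1 := by omega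
    subst hw
    have hyq : y ^ q = y⁻¹ := by
      have h0 : y ^ q * y = 1 := by rw [← pow_succ, show q + 1 = 2 * (h+1) from hqw, hyw]
      exact eq_inv_of_mul_eq_one_left h0
    have k1 : (y + 1) ^ (2 * h) * (y + 1) = y⁻¹ * (y + 1) := by
      rw [← pow_succ, ← hq, hfp, hyq]
      field_simp
      ring
    have k1' : (y + 1) ^ (2 * h) = y⁻¹ := mul_right_cancel₀ hy1' k1
    have k2 : (y - 1) ^ (2 * h) * (y - 1) = -y⁻¹ * (y - 1) := by
      rw [← pow_succ, ← hq, hfm, hyq]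
      field_simp
      try ring
    have k2' : (y - 1) ^ (2 * h) = -y⁻¹ := mul_right_cancel₀ hy1'' k2
    constructor
    · rw [hplus, mul_pow, ← pow_mul, k1', inv_pow, pow_succ, mul_inv]
      try ring
    · rw [hminus, neg_pow, mul_pow, ← pow_mul, k2', inv_pow, pow_succ, mul_inv]
      try ring

end Helpers

section FF

variable {F : Type*} [Field F] [Fintype F]

/-- value of the quadratic character. -/
theorem chiF (h : ℕ) (hcard : Fintype.card F = 2 * h + 1) (hh : h ≠ 0) (t : F) :
    (¬ IsSquare t ↔ t ^ h = -1) ∧ ((IsSquare t ∧ t ≠ 0) ↔ t ^ h = 1) := by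
  have hchar : ringChar F ≠ 2 := by
    intro hc
    have := FiniteField.even_card_iff_char_two.mp hc
    omega
  have h2 : (2 : F) ≠ 0 := Ring.two_ne_zero hchar
  have hne : (-1 : F) ≠ 1 := by
    intro hc
    apply h2
    linear_combination -hc
  by_cases ht : t = 0
  · subst ht
    have hz : (0:F) ^ h = 0 := zero_pow hh
    constructor
    · rw [hz]
      simp only [IsSquare.zero, not_true_eq_false, false_iff]
      intro hc
      exact one_ne_zero (α := F) (by linear_combination hc)
    · rw [hz]
      constructor
      · rintro ⟨-, hc⟩; exact absurd rfl hc
      · intro hc; exact absurd hc.symm one_ne_zero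
  · have hsq : IsSquare t ↔ t ^ h = 1 := by
      have := FiniteField.isSquare_iff hchar ht
      rwa [hcard, show (2 * h + 1) / 2 = h by omega] at this
    have hpm : t ^ h = 1 ∨ t ^ h = -1 := by
      have h1 : t ^ (Fintype.card F - 1) = 1 := FiniteField.pow_card_sub_one_eq_one t ht
      rw [hcard, show 2 * h + 1 - 1 = 2 * h by omega] at h1
      have h2' : (t ^ h) ^ 2 = 1 := by rw [← pow_mul, mul_comm]; exact h1
      rw [sq] at h2'
      rcases mul_self_eq_one_iff.mp h2' with h' | h'
      · left; exact h'
      · right; exact h'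
    constructor
    · constructor
      · intro hns
        rcases hpm with h1 | h1
        · exact absurd (hsq.mpr h1) hns
        · exact h1
      · intro h1 hs
        rw [hsq.mp hs] at h1
        exact hne h1.symm
    · constructor
      · rintro ⟨hs, -⟩; exact hsq.mp hs
      · intro h1; exact ⟨hsq.mpr h1, ht⟩

/-- Elements of the algebraic closure fixed by `z ↦ z ^ q` come from `F`. -/
theorem mem_range_of_pow_card {z : AlgebraicClosure F}
    (hz : z ^ (Fintype.card F) = z) :
    ∃ w : F, algebraMap F (AlgebraicClosure F) w = z := by
  classical
  by_contra hno
  push_neg at hno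
  set q := Fintype.card F with hqdef
  have hq2 : 2 ≤ q := Fintype.one_lt_card
  set P : Polynomial (AlgebraicClosure F) := X ^ q - X with hP
  have hPdeg : P.natDegree = q := by
    rw [hP]
    rw [natDegree_sub_eq_left_of_natDegree_lt] <;>
      rw [natDegree_X_pow] <;> simp [natDegree_X] <;> omega
  have hP0 : P ≠ 0 := by
    intro hc
    rw [hc, natDegree_zero] at hPdeg
    omega
  have hmem : ∀ u : AlgebraicClosure F, u ^ q = u → u ∈ P.roots.toFinset := by
    intro u hu
    rw [Multiset.mem_toFinset, mem_roots hP0]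
    simp [hP, IsRoot, hu]
  set s : Finset (AlgebraicClosure F) :=
    insert z ((Finset.univ : Finset F).image (algebraMap F (AlgebraicClosure F))) with hs
  have hzs : z ∉ (Finset.univ : Finset F).image (algebraMap F (AlgebraicClosure F)) := by
    intro hc
    obtain ⟨w, -, hw⟩ := Finset.mem_image.mp hc
    exact hno w hw
  have hsub : s ⊆ P.roots.toFinset := by
    intro u hu
    rw [hs, Finset.mem_insert] at hu
    rcases hu with rfl | hu
    · exact hmem u hz
    · obtain ⟨w, -, rfl⟩ := Finset.mem_image.mp hu
      apply hmem
      rw [← map_pow, hqdef, FiniteField.pow_card]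
  have hcards : s.card = q + 1 := by
    rw [hs, Finset.card_insert_of_notMem hzs,
      Finset.card_image_of_injective _ (algebraMap F (AlgebraicClosure F)).injective,
      Finset.card_univ]
  have h1 := Finset.card_le_card hsub
  have h2 := Multiset.toFinset_card_le P.roots
  have h3 := P.card_roots'
  omega

end FF

section MainSec

variable {F : Type*} [Field F] [Fintype F]

-- the main packaged hypotheses
variable (h n m : ℕ)

def GoodPack (F : Type*) [Field F] [Fintype F] (h n m : ℕ) : Prop :=
  Fintype.card F = 2 * h + 1 ∧ h ≠ 0 ∧
    ((n = h + 1 ∧ m = h ∧ ((-1 : F) ^ h = 1)) ∨ (n = h ∧ m = h + 1 ∧ ((-1 : F) ^ h = -1)))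

theorem GoodPack.two_ne_zero (hp : GoodPack F h n m) : (2 : F) ≠ 0 := by
  apply Ring.two_ne_zero
  intro hc
  have h2 := FiniteField.even_card_iff_char_two.mp hc
  have := hp.1
  omega
  

theorem frobOmega : ∀ z u : AlgebraicClosure F,
    (z + u) ^ (Fintype.card F) =
      z ^ (Fintype.card F) + u ^ (Fintype.card F) := by
  intro z u
  set p := ringChar F with hpdef
  haveI : CharP F p := ringChar.charP F
  have hp' : p.Prime := CharP.char_is_prime F p
  haveI := Fact.mk hp'
  haveI : CharP (AlgebraicClosure F) p :=
    charP_of_injective_algebraMap (algebraMap F (AlgebraicClosure F)).injective p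
  obtain ⟨k, -, hcardp⟩ := FiniteField.card F p
  rw [hcardp]
  exact add_pow_char_pow z u p k

theorem root_extract (hodd : Odd (Fintype.card F)) (e : F) (h2 : (2:F) ≠ 0)
    (he2 : e ≠ 2) (hem2 : e ≠ -2) :
    ∃ x : AlgebraicClosure F, x ≠ 0 ∧ x ≠ 1 ∧ x ≠ -1 ∧
      algebraMap F (AlgebraicClosure F) e = x + x⁻¹ ∧
      (x ^ (Fintype.card F) = x ∨ x ^ (Fintype.card F) = x⁻¹) := by
  set ι := algebraMap F (AlgebraicClosure F) with hι
  have hinj := ι.injective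
  have h2Ω : (2 : AlgebraicClosure F) ≠ 0 := by
    intro hc; apply h2; apply hinj; rw [map_ofNat, map_zero, hc]
  set P : Polynomial (AlgebraicClosure F) := X ^ 2 - C (ι e) * X + C 1 with hP
  have hPdeg : P.natDegree = 2 := by rw [hP]; compute_degree!
  have hPd : P.degree ≠ 0 := by
    have h1 : 0 < P.natDegree := by omega
    exact ne_of_gt (natDegree_pos_iff_degree_pos.mp h1)
  obtain ⟨x, hxr⟩ := IsAlgClosed.exists_root P hPd
  refine ⟨x, ?_⟩
  have hx2 : x ^ 2 + 1 = ι e * x := by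
    have hev : x ^ 2 - ι e * x + 1 = 0 := by
      have := hxr
      simp only [hP, IsRoot, eval_add, eval_sub, eval_mul, eval_pow, eval_X, eval_C] at this
      linear_combination this
    linear_combination hev
  have hx0 : x ≠ 0 := by
    intro hc; rw [hc] at hx2; simp at hx2
  have hie : ι e = x + x⁻¹ := by
    field_simp
    linear_combination -hx2
  have hx1 : x ≠ 1 := by
    intro hc
    apply he2
    apply hinj
    rw [map_ofNat]
    rw [hc] at hx2
    linear_combination -hx2
  have hxm1 : x ≠ -1 := by
    intro hc
    apply hem2
    apply hinj
    rw [map_neg, map_ofNat]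
    rw [hc] at hx2
    linear_combination hx2
  have hfrob := frobOmega (F := F)
  have hz : x ^ 2 - ι e * x + 1 = 0 := by linear_combination hx2
  have hqne : Fintype.card F ≠ 0 := Fintype.card_ne_zero
  have he1 : (x ^ 2 - ι e * x + 1) ^ (Fintype.card F) = 0 := by
    rw [hz]; exact zero_pow hqne
  have e2 : (ι e) ^ (Fintype.card F) = ι e := by rw [← map_pow, FiniteField.pow_card]
  have hexp : (x ^ 2 - ι e * x + 1) ^ (Fintype.card F) =
      (x ^ (Fintype.card F)) ^ 2 - ι e * x ^ (Fintype.card F) + 1 := by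
    have e1 : x ^ 2 - ι e * x + 1 = (x ^ 2 + (-(ι e * x))) + 1 := by ring
    rw [e1, hfrob, hfrob, one_pow, Odd.neg_pow hodd, mul_pow, e2, ← pow_mul,
      mul_comm 2 (Fintype.card F), pow_mul]
    ring
  have hinv : x * x⁻¹ = 1 := mul_inv_cancel₀ hx0
  have hkey : (x ^ (Fintype.card F) - x) * (x ^ (Fintype.card F) - x⁻¹) = 0 := by
    rw [hexp] at he1
    linear_combination he1 + (x ^ (Fintype.card F)) * hie + hinv
  refine ⟨hx0, hx1, hxm1, hie, ?_⟩
  rcases mul_eq_zero.mp hkey with h' | h'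
  · exact Or.inl (sub_eq_zero.mp h')
  · exact Or.inr (sub_eq_zero.mp h')

theorem lemS (h n m : ℕ) (hp : GoodPack F h n m) (e : F) :
    (¬ IsSquare (2 - e) ∧ IsSquare (2 + e) ∧ 2 + e ≠ 0) ↔
      ∃ x : AlgebraicClosure F, x ≠ 0 ∧ x ≠ 1 ∧ x ^ n = 1 ∧
        algebraMap F (AlgebraicClosure F) e = x + x⁻¹ := by
  classical
  set ι := algebraMap F (AlgebraicClosure F) with hι
  have hinj := ι.injective
  have h2 : (2 : F) ≠ 0 := GoodPack.two_ne_zero h n m hp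
  obtain ⟨hcard, hh0, hpack⟩ := hp
  have hchi := chiF (F := F) h hcard hh0
  have hodd : Odd (Fintype.card F) := ⟨h, by omega⟩
  have hfrob := frobOmega (F := F)
  have h2Ω : (2 : AlgebraicClosure F) ≠ 0 := by
    intro hc; apply h2; apply hinj; rw [map_ofNat, map_zero, hc]
  have hne1Ω : (-1 : AlgebraicClosure F) ≠ 1 := by
    intro hc; apply h2Ω; linear_combination -hc
  have hne1F : (-1 : F) ≠ 1 := by
    intro hc; apply h2; linear_combination -hc
  constructor
  · rintro ⟨hns, hsq, hne0⟩
    have hminusF : (2 - e) ^ h = -1 := (hchi (2 - e)).1.mp hns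
    have hplusF : (2 + e) ^ h = 1 := (hchi (2 + e)).2.mp ⟨hsq, hne0⟩
    have he2 : e ≠ 2 := by
      intro hc; subst hc
      exact hns (by rw [sub_self]; exact IsSquare.zero)
    have hem2 : e ≠ -2 := by
      intro hc; subst hc; exact hne0 (by ring)
    obtain ⟨x, hx0, hx1, hxm1, hie, hcases⟩ := root_extract hodd e h2 he2 hem2
    have hTp : ((2 : AlgebraicClosure F) + (x + x⁻¹)) ^ h = 1 := by
      have hc := congrArg ι hplusF
      simp only [map_pow, map_add, map_ofNat, map_one, hie] at hc
      rw [← hie]; exact hc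
    have hTm : ((2 : AlgebraicClosure F) - (x + x⁻¹)) ^ h = -1 := by
      have hc := congrArg ι hminusF
      simp only [map_pow, map_sub, map_ofNat, map_neg, map_one, hie] at hc
      rw [← hie]; exact hc
    rcases hcases with hxq | hxq
    · -- x ^ q = x
      have hyw : x ^ (2 * h) = 1 := by
        apply mul_right_cancel₀ hx0
        rw [← pow_succ, ← hcard, hxq, one_mul]
      obtain ⟨c1, c2⟩ := chi_aux (Fintype.card F) h h hcard hfrob x hx0 hx1 hxm1 hyw 1
        (Or.inl ⟨hcard, rfl⟩)
      rw [c1] at hTp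
      have hxh : x ^ h = 1 := inv_eq_one.mp hTp
      rw [c2, hxh] at hTm
      -- hTm : (-1)^h * 1 * 1⁻¹ = -1
      have hsignΩ : (-1 : AlgebraicClosure F) ^ h = -1 := by linear_combination hTm
      rcases hpack with ⟨hn, hm, hvi⟩ | ⟨hn, hm, hvi⟩
      · exfalso
        have hc := congrArg ι hvi
        simp only [map_pow, map_neg, map_one] at hc
        rw [hc] at hsignΩ
        exact hne1Ω hsignΩ.symm
      · exact ⟨x, hx0, hx1, by rw [hn]; exact hxh, hie⟩
    · -- x ^ q = x⁻¹
      have hyw : x ^ (2 * (h + 1)) = 1 := by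
        have hz : x ^ (Fintype.card F) * x = 1 := by rw [hxq, inv_mul_cancel₀ hx0]
        rw [← pow_succ] at hz
        rw [show 2 * (h + 1) = Fintype.card F + 1 by omega]
        exact hz
      obtain ⟨c1, c2⟩ := chi_aux (Fintype.card F) h (h + 1) hcard hfrob x hx0 hx1 hxm1 hyw (-1)
        (Or.inr ⟨by omega, rfl⟩)
      rw [c1] at hTp
      have hxh : x ^ (h + 1) = 1 := inv_eq_one.mp hTp
      rw [c2, hxh] at hTm
      have hsignΩ : (-1 : AlgebraicClosure F) ^ h = 1 := by linear_combination -hTm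
      rcases hpack with ⟨hn, hm, hvi⟩ | ⟨hn, hm, hvi⟩
      · exact ⟨x, hx0, hx1, by rw [hn]; exact hxh, hie⟩
      · exfalso
        have hc := congrArg ι hvi
        simp only [map_pow, map_neg, map_one] at hc
        rw [hc] at hsignΩ
        exact hne1Ω hsignΩ
  · rintro ⟨x, hx0, hx1, hxn, hie⟩
    have hnodd : Odd n := by
      rcases hpack with ⟨hn, hm, hvi⟩ | ⟨hn, hm, hvi⟩
      · have hev : Even h := (neg_one_pow_eq_one_iff_even hne1F).mp hvi
        rw [hn]; rcases hev with ⟨j, hj⟩; exact ⟨j, by omega⟩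
      · rcases Nat.even_or_odd h with hev | hodd'
        · exfalso; rw [hev.neg_one_pow] at hvi; exact hne1F hvi.symm
        · rw [hn]; exact hodd'
    have hxm1 : x ≠ -1 := by
      intro hc
      rw [hc, hnodd.neg_one_pow] at hxn
      exact hne1Ω hxn
    have hx2n : x ^ (2 * n) = 1 := by
      rw [mul_comm, pow_mul, hxn, one_pow]
    -- transfer target: produce F-statements
    have key : ((2 : AlgebraicClosure F) + (x + x⁻¹)) ^ h = 1 ∧
        ((2 : AlgebraicClosure F) - (x + x⁻¹)) ^ h = -1 := by
      rcases hpack with ⟨hn, hm, hvi⟩ | ⟨hn, hm, hvi⟩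
      · have hviΩ : (-1 : AlgebraicClosure F) ^ h = 1 := by
          have hc := congrArg ι hvi
          simpa only [map_pow, map_neg, map_one] using hc
        have hyw : x ^ (2 * (h + 1)) = 1 := by rw [← hn]; exact hx2n
        obtain ⟨c1, c2⟩ := chi_aux (Fintype.card F) h (h + 1) hcard hfrob x hx0 hx1 hxm1 hyw (-1)
          (Or.inr ⟨by omega, rfl⟩)
        have hxh : x ^ (h + 1) = 1 := by rw [← hn]; exact hxn
        rw [c1, c2, hxh, hviΩ]
        constructor
        · field_simp
        · field_simp
          try ring
      · have hviΩ : (-1 : AlgebraicClosure F) ^ h = -1 := by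
          have hc := congrArg ι hvi
          simpa only [map_pow, map_neg, map_one] using hc
        have hyw : x ^ (2 * h) = 1 := by rw [← hn]; exact hx2n
        obtain ⟨c1, c2⟩ := chi_aux (Fintype.card F) h h hcard hfrob x hx0 hx1 hxm1 hyw 1
          (Or.inl ⟨hcard, rfl⟩)
        have hxh : x ^ h = 1 := by rw [← hn]; exact hxn
        rw [c1, c2, hxh, hviΩ]
        constructor
        · field_simp
        · field_simp
          try ring
    have hplusF : (2 + e) ^ h = 1 := by
      apply hinj
      simp only [map_pow, map_add, map_ofNat, map_one, hie]
      exact key.1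
    have hminusF : (2 - e) ^ h = -1 := by
      apply hinj
      simp only [map_pow, map_sub, map_ofNat, map_neg, map_one, hie]
      exact key.2
    obtain ⟨hsq, hne0⟩ := (hchi (2 + e)).2.mpr hplusF
    exact ⟨(hchi (2 - e)).1.mpr hminusF, hsq, hne0⟩

theorem lemT (h n m : ℕ) (hp : GoodPack F h n m) (e : F) :
    (¬ IsSquare (2 - e) ∧ ¬ IsSquare (2 + e)) ↔
      ∃ y : AlgebraicClosure F, y ≠ 0 ∧ y ^ m = -1 ∧
        algebraMap F (AlgebraicClosure F) e = y + y⁻¹ := by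
  classical
  set ι := algebraMap F (AlgebraicClosure F) with hι
  have hinj := ι.injective
  have h2 : (2 : F) ≠ 0 := GoodPack.two_ne_zero h n m hp
  obtain ⟨hcard, hh0, hpack⟩ := hp
  have hchi := chiF (F := F) h hcard hh0
  have hodd : Odd (Fintype.card F) := ⟨h, by omega⟩
  have hfrob := frobOmega (F := F)
  have h2Ω : (2 : AlgebraicClosure F) ≠ 0 := by
    intro hc; apply h2; apply hinj; rw [map_ofNat, map_zero, hc]
  have hne1Ω : (-1 : AlgebraicClosure F) ≠ 1 := by
    intro hc; apply h2Ω; linear_combination -hc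
  have hne1F : (-1 : F) ≠ 1 := by
    intro hc; apply h2; linear_combination -hc
  have hmeven : Even m := by
    rcases hpack with ⟨hn, hm, hvi⟩ | ⟨hn, hm, hvi⟩
    · have hev : Even h := (neg_one_pow_eq_one_iff_even hne1F).mp hvi
      rw [hm]; exact hev
    · rcases Nat.even_or_odd h with hev | hodd'
      · exfalso; rw [hev.neg_one_pow] at hvi; exact hne1F hvi.symm
      · rw [hm]; rcases hodd' with ⟨j, hj⟩; exact ⟨j + 1, by omega⟩
  constructor
  · rintro ⟨hns1, hns2⟩
    have hminusF : (2 - e) ^ h = -1 := (hchi (2 - e)).1.mp hns1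
    have hplusF : (2 + e) ^ h = -1 := (hchi (2 + e)).1.mp hns2
    have he2 : e ≠ 2 := by
      intro hc; subst hc
      exact hns1 (by rw [sub_self]; exact IsSquare.zero)
    have hem2 : e ≠ -2 := by
      intro hc; subst hc
      exact hns2 (by rw [show (2:F) + -2 = 0 by ring]; exact IsSquare.zero)
    obtain ⟨x, hx0, hx1, hxm1, hie, hcases⟩ := root_extract hodd e h2 he2 hem2
    have hTp : ((2 : AlgebraicClosure F) + (x + x⁻¹)) ^ h = -1 := by
      have hc := congrArg ι hplusF
      simp only [map_pow, map_add, map_ofNat, map_neg, map_one, hie] at hc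
      rw [← hie]; exact hc
    have hTm : ((2 : AlgebraicClosure F) - (x + x⁻¹)) ^ h = -1 := by
      have hc := congrArg ι hminusF
      simp only [map_pow, map_sub, map_ofNat, map_neg, map_one, hie] at hc
      rw [← hie]; exact hc
    rcases hcases with hxq | hxq
    · -- x ^ q = x : forces m = h case
      have hyw : x ^ (2 * h) = 1 := by
        apply mul_right_cancel₀ hx0
        rw [← pow_succ, ← hcard, hxq, one_mul]
      obtain ⟨c1, c2⟩ := chi_aux (Fintype.card F) h h hcard hfrob x hx0 hx1 hxm1 hyw 1
        (Or.inl ⟨hcard, rfl⟩)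
      rw [c1] at hTp
      have hxh : x ^ h = -1 := by
        rw [← inv_inv (x ^ h), hTp, inv_neg, inv_one]
      rw [c2, hxh] at hTm
      have hsignΩ : (-1 : AlgebraicClosure F) ^ h = 1 := by
        have h3 : (-1 : AlgebraicClosure F)⁻¹ = -1 := by rw [inv_neg, inv_one]
        rw [h3] at hTm
        linear_combination -hTm
      rcases hpack with ⟨hn, hm, hvi⟩ | ⟨hn, hm, hvi⟩
      · exact ⟨x, hx0, by rw [hm]; exact hxh, hie⟩
      · exfalso
        have hc := congrArg ι hvi
        simp only [map_pow, map_neg, map_one] at hc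
        rw [hc] at hsignΩ
        exact hne1Ω hsignΩ
    · -- x ^ q = x⁻¹ : forces m = h + 1 case
      have hyw : x ^ (2 * (h + 1)) = 1 := by
        have hz : x ^ (Fintype.card F) * x = 1 := by rw [hxq, inv_mul_cancel₀ hx0]
        rw [← pow_succ] at hz
        rw [show 2 * (h + 1) = Fintype.card F + 1 by omega]
        exact hz
      obtain ⟨c1, c2⟩ := chi_aux (Fintype.card F) h (h + 1) hcard hfrob x hx0 hx1 hxm1 hyw (-1)
        (Or.inr ⟨by omega, rfl⟩)
      rw [c1] at hTp
      have hxh : x ^ (h + 1) = -1 := by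
        rw [← inv_inv (x ^ (h + 1)), hTp, inv_neg, inv_one]
      rw [c2, hxh] at hTm
      have hsignΩ : (-1 : AlgebraicClosure F) ^ h = -1 := by
        have h3 : (-1 : AlgebraicClosure F)⁻¹ = -1 := by rw [inv_neg, inv_one]
        rw [h3] at hTm
        linear_combination hTm
      rcases hpack with ⟨hn, hm, hvi⟩ | ⟨hn, hm, hvi⟩
      · exfalso
        have hc := congrArg ι hvi
        simp only [map_pow, map_neg, map_one] at hc
        rw [hc] at hsignΩ
        exact hne1Ω hsignΩ.symm
      · exact ⟨x, hx0, by rw [hm]; exact hxh, hie⟩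
  · rintro ⟨y, hy0, hym, hie⟩
    have hy1 : y ≠ 1 := by
      intro hc; rw [hc, one_pow] at hym; exact hne1Ω hym.symm
    have hym1 : y ≠ -1 := by
      intro hc; rw [hc, hmeven.neg_one_pow] at hym; exact hne1Ω hym.symm
    have hy2m : y ^ (2 * m) = 1 := by
      rw [mul_comm, pow_mul, hym]; ring
    have key : ((2 : AlgebraicClosure F) + (y + y⁻¹)) ^ h = -1 ∧
        ((2 : AlgebraicClosure F) - (y + y⁻¹)) ^ h = -1 := by
      rcases hpack with ⟨hn, hm, hvi⟩ | ⟨hn, hm, hvi⟩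
      · have hviΩ : (-1 : AlgebraicClosure F) ^ h = 1 := by
          have hc := congrArg ι hvi
          simpa only [map_pow, map_neg, map_one] using hc
        have hyw : y ^ (2 * h) = 1 := by rw [← hm]; exact hy2m
        obtain ⟨c1, c2⟩ := chi_aux (Fintype.card F) h h hcard hfrob y hy0 hy1 hym1 hyw 1
          (Or.inl ⟨hcard, rfl⟩)
        have hyh : y ^ h = -1 := by rw [← hm]; exact hym
        rw [c1, c2, hyh, hviΩ]
        constructor
        · field_simp
        · field_simp
          try ring
      · have hviΩ : (-1 : AlgebraicClosure F) ^ h = -1 := by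
          have hc := congrArg ι hvi
          simpa only [map_pow, map_neg, map_one] using hc
        have hyw : y ^ (2 * (h + 1)) = 1 := by rw [← hm]; exact hy2m
        obtain ⟨c1, c2⟩ := chi_aux (Fintype.card F) h (h + 1) hcard hfrob y hy0 hy1 hym1 hyw (-1)
          (Or.inr ⟨by omega, rfl⟩)
        have hyh : y ^ (h + 1) = -1 := by rw [← hm]; exact hym
        rw [c1, c2, hyh, hviΩ]
        constructor
        · field_simp
        · field_simp
          try ring
    have hplusF : (2 + e) ^ h = -1 := by
      apply hinj
      simp only [map_pow, map_add, map_ofNat, map_neg, map_one, hie]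
      exact key.1
    have hminusF : (2 - e) ^ h = -1 := by
      apply hinj
      simp only [map_pow, map_sub, map_ofNat, map_neg, map_one, hie]
      exact key.2
    exact ⟨(hchi (2 - e)).1.mpr hminusF, (hchi (2 + e)).1.mpr hplusF⟩

end MainSec

/-- Let `S = {b ∈ F_q : 2 - b is a nonsquare and 2 + b is a nonzero
square}`. For `b ∈ S`, let `c = ∏ (b - a)`, the product over all `a ∈ F_q` with `2 - a`
and `2 + a` both nonsquares. Then `c ∈ S` and `c² - 2 = b`; i.e. this is the inverse of
the permutation `b ↦ b² - 2` of `S`. -/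
theorem prod_inverse_of_sq_sub_two {F : Type*} [Field F] [Fintype F]
    (hq : Odd (Fintype.card F)) (b : F)
    (hb : ¬ IsSquare (2 - b) ∧ (IsSquare (2 + b) ∧ 2 + b ≠ 0)) :
    let c := ∏ a ∈ Finset.univ.filter
        (fun a : F => ¬ IsSquare (2 - a) ∧ ¬ IsSquare (2 + a)), (b - a)
    (¬ IsSquare (2 - c) ∧ (IsSquare (2 + c) ∧ 2 + c ≠ 0)) ∧ c ^ 2 - 2 = b := by
  classical
  intro c
  obtain ⟨h, hh⟩ := hq
  have hcard : Fintype.card F = 2 * h + 1 := by omega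
  have hh0 : h ≠ 0 := by
    have := Fintype.one_lt_card (α := F)
    omega
  obtain ⟨n, m, hpack⟩ : ∃ n m : ℕ, GoodPack F h n m := by
    rcases Nat.even_or_odd h with he | ho
    · exact ⟨h + 1, h, hcard, hh0, Or.inl ⟨rfl, rfl, he.neg_one_pow⟩⟩
    · exact ⟨h, h + 1, hcard, hh0, Or.inr ⟨rfl, rfl, ho.neg_one_pow⟩⟩
  set ι := algebraMap F (AlgebraicClosure F) with hι
  have hinj := ι.injective
  have h2 : (2 : F) ≠ 0 := GoodPack.two_ne_zero h n m hpack
  have h2Ω : (2 : AlgebraicClosure F) ≠ 0 := by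
    intro hc; apply h2; apply hinj; rw [map_ofNat, map_zero, hc]
  have hne1Ω : (-1 : AlgebraicClosure F) ≠ 1 := fun hc => h2Ω (by linear_combination -hc)
  have hne1F : (-1 : F) ≠ 1 := fun hc => h2 (by linear_combination -hc)
  have hnm : (n = m + 1 ∨ m = n + 1) := by
    rcases hpack.2.2 with ⟨hn, hm, -⟩ | ⟨hn, hm, -⟩
    · left; omega
    · right; omega
  have hmeven : Even m := by
    rcases hpack.2.2 with ⟨hn, hm, hvi⟩ | ⟨hn, hm, hvi⟩
    · have hev : Even h := (neg_one_pow_eq_one_iff_even hne1F).mp hvi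
      rw [hm]; exact hev
    · rcases Nat.even_or_odd h with hev | hodd'
      · exfalso; rw [hev.neg_one_pow] at hvi; exact hne1F hvi.symm
      · rw [hm]; rcases hodd' with ⟨j, hj⟩; exact ⟨j + 1, by omega⟩
  have hmF : ((m : ℕ) : F) ≠ 0 := by
    intro hc
    have hqF : ((Fintype.card F : ℕ) : F) = 0 := FiniteField.cast_card_eq_zero F
    rw [hcard] at hqF
    push_cast at hqF
    rcases hpack.2.2 with ⟨-, hm, -⟩ | ⟨-, hm, -⟩
    · rw [← hm, hc] at hqF
      norm_num at hqF
    · have hcast : ((h : ℕ) : F) = ((m : ℕ) : F) - 1 := by rw [hm]; push_cast; ring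
      rw [hcast, hc] at hqF
      norm_num at hqF
  have hm0 : m ≠ 0 := by
    intro hc; apply hmF; rw [hc]; simp
  have hmΩ : ((m : ℕ) : AlgebraicClosure F) ≠ 0 := by
    intro hc; apply hmF; apply hinj; rw [map_natCast, map_zero, hc]
  set T : Finset F := Finset.univ.filter
      (fun a : F => ¬ IsSquare (2 - a) ∧ ¬ IsSquare (2 + a)) with hT
  have hmemT : ∀ a : F, a ∈ T ↔ (¬ IsSquare (2 - a) ∧ ¬ IsSquare (2 + a)) := by
    intro a
    rw [hT, Finset.mem_filter]
    simp only [Finset.mem_univ, true_and]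
  have hc : c = ∏ a ∈ T, (b - a) := rfl
  -- the polynomial X ^ m + 1
  set P : Polynomial (AlgebraicClosure F) := X ^ m - C (-1) with hP
  have hmonic : P.Monic := monic_X_pow_sub_C _ hm0
  have hsep : P.Separable := separable_X_pow_sub_C (-1) hmΩ (neg_ne_zero.mpr one_ne_zero)
  have hsplits : P.Splits := IsAlgClosed.splits P
  have hdeg : P.natDegree = m := natDegree_X_pow_sub_C
  have hnodup : P.roots.Nodup := nodup_roots hsep
  have hcardroots : Multiset.card P.roots = m := by
    rw [splits_iff_card_roots.mp hsplits, hdeg]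
  set R : Finset (AlgebraicClosure F) := ⟨P.roots, hnodup⟩ with hR
  have hmemR : ∀ y, y ∈ R ↔ y ^ m = -1 := by
    intro y
    have : y ∈ R ↔ y ∈ P.roots := Iff.rfl
    rw [this, mem_roots hmonic.ne_zero]
    simp only [hP, IsRoot, eval_sub, eval_pow, eval_X, eval_C, sub_neg_eq_add]
    constructor
    · intro hz; linear_combination hz
    · intro hz; linear_combination hz
  have hRcard : R.card = m := hcardroots
  have hprodR : ∀ z : AlgebraicClosure F, ∏ y ∈ R, (z - y) = z ^ m + 1 := by
    intro z
    have heq := hsplits.eq_prod_roots_of_monic hmonic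
    have hev : eval z P = z ^ m + 1 := by
      simp only [hP, eval_sub, eval_pow, eval_X, eval_C, sub_neg_eq_add]
    have h1 : eval z P = (P.roots.map fun a => z - a).prod := by
      conv_lhs => rw [heq]
      rw [eval_multiset_prod, Multiset.map_map]
      congr 1
      apply Multiset.map_congr rfl
      intro a _
      simp
    rw [Finset.prod_eq_multiset_prod]
    have hval : R.val = P.roots := rfl
    rw [hval, ← h1, hev]
  have hfrob := frobOmega (F := F)
  have hmaps : ∀ y ∈ R, (y + y⁻¹) ∈ T.image ι := by
    intro y hy
    rw [hmemR] at hy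
    have hy0 : y ≠ 0 := by
      intro hcy; rw [hcy, zero_pow hm0] at hy
      exact h2Ω (by linear_combination 2 * hy)
    have hfix : (y + y⁻¹) ^ (Fintype.card F) = y + y⁻¹ := by
      rw [hfrob, inv_pow]
      rcases hpack.2.2 with ⟨hn, hm, -⟩ | ⟨hn, hm, -⟩
      · -- m = h, card = 2 m + 1
        have hq2m : Fintype.card F = 2 * m + 1 := by omega
        have hyq : y ^ (Fintype.card F) = y := by
          rw [hq2m, pow_succ, two_mul, pow_add, hy]
          ring
        rw [hyq]
      · -- m = h + 1, card + 1 = 2 m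
        have hq2m : Fintype.card F + 1 = 2 * m := by omega
        have h1 : y ^ (Fintype.card F) * y = 1 := by
          rw [← pow_succ, hq2m, two_mul, pow_add, hy]
          ring
        have hyq : y ^ (Fintype.card F) = y⁻¹ := eq_inv_of_mul_eq_one_left h1
        rw [hyq, inv_inv]
        ring
    obtain ⟨w, hw⟩ := mem_range_of_pow_card hfix
    have hwT : w ∈ T := by
      rw [hmemT]
      exact (lemT h n m hpack w).mpr ⟨y, hy0, hy, hw⟩
    exact Finset.mem_image.mpr ⟨w, hwT, hw⟩
  have hfiber : ∀ e ∈ T, ∃ y₀ : AlgebraicClosure F,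
      (R.filter (fun y => y + y⁻¹ = ι e)) = {y₀, y₀⁻¹} ∧ y₀ ≠ y₀⁻¹ ∧ y₀ ≠ 0 ∧
        ι e = y₀ + y₀⁻¹ := by
    intro e he
    rw [hmemT] at he
    obtain ⟨y₀, hy00, hy0m, hy0e⟩ := (lemT h n m hpack e).mp he
    have hy0ne : y₀ ≠ y₀⁻¹ := by
      intro hcy
      have hsq : y₀ * y₀ = 1 := by
        nth_rewrite 2 [hcy]
        exact mul_inv_cancel₀ hy00
      have h1 : (y₀ - 1) * (y₀ + 1) = 0 := by linear_combination hsq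
      rcases mul_eq_zero.mp h1 with hc2 | hc2
      · have hy1 : y₀ = 1 := by linear_combination hc2
        rw [hy1, one_pow] at hy0m
        exact hne1Ω hy0m.symm
      · have hy1 : y₀ = -1 := by linear_combination hc2
        rw [hy1, hmeven.neg_one_pow] at hy0m
        exact hne1Ω hy0m.symm
    refine ⟨y₀, ?_, hy0ne, hy00, hy0e⟩
    ext y
    rw [Finset.mem_filter, hmemR, Finset.mem_insert, Finset.mem_singleton]
    constructor
    · rintro ⟨hym', hysum⟩
      have hy0' : y ≠ 0 := by
        intro hcy; rw [hcy, zero_pow hm0] at hym'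
        exact h2Ω (by linear_combination 2 * hym')
      have hx1 : y₀ * y₀⁻¹ = 1 := mul_inv_cancel₀ hy00
      have hx2 : y * y⁻¹ = 1 := mul_inv_cancel₀ hy0'
      have hsum : y + y⁻¹ = y₀ + y₀⁻¹ := by rw [hysum, hy0e]
      have hfact : (y - y₀) * (y - y₀⁻¹) = 0 := by
        linear_combination y * hsum + hx1 - hx2
      rcases mul_eq_zero.mp hfact with h' | h'
      · exact Or.inl (sub_eq_zero.mp h')
      · exact Or.inr (sub_eq_zero.mp h')
    · rintro (rfl | rfl)
      · exact ⟨hy0m, hy0e.symm⟩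
      · constructor
        · rw [inv_pow, hy0m, inv_neg, inv_one]
        · rw [inv_inv, add_comm]
          exact hy0e.symm
  have hfibprod : ∀ e ∈ T, ∀ z : AlgebraicClosure F,
      ∏ y ∈ R.filter (fun y => y + y⁻¹ = ι e), (z - y) = z ^ 2 - ι e * z + 1 := by
    intro e he z
    obtain ⟨y₀, hfeq, hy0ne, hy00, hy0e⟩ := hfiber e he
    rw [hfeq, Finset.prod_pair hy0ne]
    have hx1 : y₀ * y₀⁻¹ = 1 := mul_inv_cancel₀ hy00
    linear_combination hx1 + z * hy0e
  have hfibcard : ∀ e ∈ T, (R.filter (fun y => y + y⁻¹ = ι e)).card = 2 := by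
    intro e he
    obtain ⟨y₀, hfeq, hy0ne, -, -⟩ := hfiber e he
    rw [hfeq]
    exact Finset.card_pair hy0ne
  have hinjT : ∀ x ∈ T, ∀ y ∈ T, ι x = ι y → x = y := fun x _ y _ hxy => hinj hxy
  have hgroup : ∀ z : AlgebraicClosure F,
      ∏ e ∈ T, (z ^ 2 - ι e * z + 1) = z ^ m + 1 := by
    intro z
    calc ∏ e ∈ T, (z ^ 2 - ι e * z + 1)
        = ∏ e ∈ T, ∏ y ∈ R.filter (fun y => y + y⁻¹ = ι e), (z - y) := by
          exact Finset.prod_congr rfl fun e he => (hfibprod e he z).symm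
      _ = ∏ j ∈ T.image ι, ∏ y ∈ R.filter (fun y => y + y⁻¹ = j), (z - y) := by
          rw [Finset.prod_image hinjT]
      _ = ∏ y ∈ R, (z - y) := Finset.prod_fiberwise_of_maps_to hmaps _
      _ = z ^ m + 1 := hprodR z
  have hcardT : 2 * T.card = m := by
    have h1 : R.card = ∑ j ∈ T.image ι, (R.filter (fun y => y + y⁻¹ = j)).card :=
      Finset.card_eq_sum_card_fiberwise hmaps
    rw [Finset.sum_image hinjT] at h1
    rw [Finset.sum_congr rfl hfibcard] at h1
    rw [Finset.sum_const, smul_eq_mul] at h1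
    rw [hRcard] at h1
    omega
  -- now the main computation
  obtain ⟨x, hx0, hx1, hxn, hxb⟩ := (lemS h n m hpack b).mp hb
  have hcval : ι c = ∏ e ∈ T, (ι b - ι e) := by
    rw [hc, map_prod]
    exact Finset.prod_congr rfl fun e _ => map_sub ι b e
  have hxinv : x * x⁻¹ = 1 := mul_inv_cancel₀ hx0
  have hxq : x ^ 2 + 1 = ι b * x := by
    rw [hxb]
    linear_combination -hxinv
  set k := T.card with hk
  have hmain : x ^ k * ι c = x ^ m + 1 := by
    rw [hcval, ← hgroup x, hk, ← Finset.prod_const, ← Finset.prod_mul_distrib]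
    exact Finset.prod_congr rfl fun e _ => by linear_combination -hxq
  have hxk0 : x ^ k ≠ 0 := pow_ne_zero _ hx0
  have hxm : x ^ m = x ^ k * x ^ k := by
    rw [← pow_add]
    congr 1
    omega
  have hick : ι c = x ^ k + (x ^ k)⁻¹ := by
    apply mul_left_cancel₀ hxk0
    rw [hmain, hxm, mul_add, mul_inv_cancel₀ hxk0]
  have hxkn : (x ^ k) ^ n = 1 := by
    rw [← pow_mul, mul_comm, pow_mul, hxn, one_pow]
  have hxk1 : x ^ k ≠ 1 := by
    intro hck
    have hd1 : orderOf x ∣ k := orderOf_dvd_of_pow_eq_one hck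
    have hd2 : orderOf x ∣ n := orderOf_dvd_of_pow_eq_one hxn
    have hdm : orderOf x ∣ m := by
      rw [← hcardT]
      exact Dvd.dvd.mul_left hd1 2
    have hone : orderOf x ∣ 1 := by
      rcases hnm with h' | h'
      · have hd := Nat.dvd_sub hd2 hdm
        rw [h'] at hd
        simpa using hd
      · have hd := Nat.dvd_sub hdm hd2
        rw [h'] at hd
        simpa using hd
    exact hx1 (orderOf_eq_one_iff.mp (Nat.dvd_one.mp hone))
  constructor
  · exact (lemS h n m hpack c).mpr ⟨x ^ k, hxk0, hxk1, hxkn, hick⟩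
  · apply hinj
    rw [map_sub, map_pow, map_ofNat, hick, hxb]
    have huinv : x ^ k * (x ^ k)⁻¹ = 1 := mul_inv_cancel₀ hxk0
    rcases hnm with h' | h'
    · -- n = m + 1 : x ^ m = x⁻¹
      have h1 : x ^ m * x = 1 := by rw [← pow_succ, ← h', hxn]
      have h2 : x ^ m = x⁻¹ := eq_inv_of_mul_eq_one_left h1
      have huu : x ^ k * x ^ k = x⁻¹ := by rw [← hxm, h2]
      have huinv2 : (x ^ k)⁻¹ * (x ^ k)⁻¹ = x := by
        rw [← mul_inv, huu, inv_inv]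
      linear_combination huu + huinv2 + 2 * huinv
    · -- m = n + 1 : x ^ m = x
      have h2 : x ^ m = x := by rw [h', pow_succ, hxn, one_mul]
      have huu : x ^ k * x ^ k = x := by rw [← hxm, h2]
      have huinv2 : (x ^ k)⁻¹ * (x ^ k)⁻¹ = x⁻¹ := by
        rw [← mul_inv, huu]
      linear_combination huu + huinv2 + 2 * huinv
end
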